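/- Let S be a countable subset of the Euclidean plane ℝ² and let N and N₁ be two distinct points of ℝ² neither of which lies in S. Then the set of points c ∈ ℝ² that are equidistant from N and N₁ and are the centre of a circle through N and N₁ containing at least one point of S on its circumference — i.e., the set {c | dist(c, N) = dist(c, N₁) and there exists a ∈ S with dist(c, a) = dist(c, N)} — is countable. -/

import Mathlib

open AffineSubspace EuclideanGeometry
open scoped RealInnerProductSpace

/-- No point is equidistant from three distinct collinear points. -/
lemma no_equidistant_collinear {N N₁ a c : EuclideanSpace ℝ (Fin 2)}
    (haN : a ≠ N) (haN₁ : a ≠ N₁) (t : ℝ)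
    (hat : a - N = t • (N₁ - N))
    (h1 : dist c N = dist c N₁) (h2 : dist c a = dist c N) : False := by
  have haN' : a - N ≠ 0 := sub_ne_zero.mpr haN
  have hu : N₁ - N ≠ 0 := by
    intro h; rw [h, smul_zero] at hat; exact haN' hat
  have ht0 : t ≠ 0 := by
    intro h; rw [h, zero_smul] at hat; exact haN' hat
  have ht1 : t ≠ 1 := by
    intro h; rw [h, one_smul, sub_left_inj] at hat; exact haN₁ hat
  have hm1 : c ∈ perpBisector N N₁ := mem_perpBisector_iff_dist_eq.mpr h1
  have hm2 : c ∈ perpBisector N a := mem_perpBisector_iff_dist_eq.mpr h2.symm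
  rw [mem_perpBisector_iff_inner_eq] at hm1 hm2
  rw [show (N₁ : EuclideanSpace ℝ (Fin 2)) -ᵥ N = N₁ - N from rfl] at hm1
  rw [show (a : EuclideanSpace ℝ (Fin 2)) -ᵥ N = a - N from rfl, hat,
    real_inner_smul_right, hm1] at hm2
  have hd1 : dist N N₁ ^ 2 = ‖N₁ - N‖ ^ 2 := by rw [dist_eq_norm, norm_sub_rev]
  have hd2 : dist N a ^ 2 = t ^ 2 * ‖N₁ - N‖ ^ 2 := by
    rw [dist_eq_norm, norm_sub_rev, hat, norm_smul, mul_pow]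
    simp [sq_abs]
  rw [hd1, hd2] at hm2
  have hnorm : ‖N₁ - N‖ ^ 2 ≠ 0 := pow_ne_zero _ (norm_ne_zero_iff.mpr hu)
  have : t * (1 - t) * ‖N₁ - N‖ ^ 2 = 0 := by linarith [hm2]
  rcases mul_eq_zero.mp this with h | h
  · rcases mul_eq_zero.mp h with h | h
    · exact ht0 h
    · exact ht1 (by linarith)
  · exact hnorm h

/-- Counting lemma from Cantor's proof: the centres of circles through two fixed
points N, N₁ ∉ S whose circumference meets the countable set S form a countable
set. -/
theorem centres_meeting_countable_set_countable
    (S : Set (EuclideanSpace ℝ (Fin 2))) (hS : S.Countable)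
    (N N₁ : EuclideanSpace ℝ (Fin 2)) (hNN₁ : N ≠ N₁) (hN : N ∉ S) (hN₁ : N₁ ∉ S) :
    Set.Countable {c : EuclideanSpace ℝ (Fin 2) |
      dist c N = dist c N₁ ∧ ∃ a ∈ S, dist c a = dist c N} := by
  have hsub : {c : EuclideanSpace ℝ (Fin 2) |
      dist c N = dist c N₁ ∧ ∃ a ∈ S, dist c a = dist c N} ⊆
      ⋃ a ∈ S, {c | dist c N = dist c N₁ ∧ dist c a = dist c N} := by
    rintro c ⟨h1, a, ha, h2⟩
    exact Set.mem_biUnion ha ⟨h1, h2⟩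
  refine Set.Countable.mono hsub (hS.biUnion fun a ha => Set.Subsingleton.countable ?_)
  intro c hc c' hc'
  obtain ⟨hc1, hc2⟩ := hc
  obtain ⟨hc1', hc2'⟩ := hc'
  by_contra hne
  have haN : a ≠ N := fun h => hN (h ▸ ha)
  have haN₁ : a ≠ N₁ := fun h => hN₁ (h ▸ ha)
  have hv : c' - c ≠ 0 := sub_ne_zero.mpr (Ne.symm hne)
  -- orthogonality
  have o1 : ⟪c' - c, N₁ - N⟫ = 0 := by
    have := inner_vsub_vsub_of_dist_eq_of_dist_eq
      (c₁ := c) (c₂ := c') (p₁ := N) (p₂ := N₁)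
      (by rw [dist_comm, dist_comm N₁]; exact hc1)
      (by rw [dist_comm, dist_comm N₁]; exact hc1')
    simpa using this
  have o2 : ⟪c' - c, a - N⟫ = 0 := by
    have := inner_vsub_vsub_of_dist_eq_of_dist_eq
      (c₁ := c) (c₂ := c') (p₁ := N) (p₂ := a)
      (by rw [dist_comm, dist_comm a]; exact hc2.symm)
      (by rw [dist_comm, dist_comm a]; exact hc2'.symm)
    simpa using this
  haveI : Fact (Module.finrank ℝ (EuclideanSpace ℝ (Fin 2)) = 1 + 1) :=
    ⟨by simp [finrank_euclideanSpace]⟩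
  have hdim : Module.finrank ℝ ((ℝ ∙ (c' - c))ᗮ : Submodule ℝ (EuclideanSpace ℝ (Fin 2))) = 1 :=
    Submodule.finrank_orthogonal_span_singleton hv
  have hNmem : N₁ - N ∈ (ℝ ∙ (c' - c))ᗮ :=
    Submodule.mem_orthogonal_singleton_iff_inner_right.mpr o1
  have hamem : a - N ∈ (ℝ ∙ (c' - c))ᗮ :=
    Submodule.mem_orthogonal_singleton_iff_inner_right.mpr o2
  have hle : (ℝ ∙ (N₁ - N)) ≤ (ℝ ∙ (c' - c))ᗮ := by
    rw [Submodule.span_singleton_le_iff_mem]; exact hNmem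
  have huN : N₁ - N ≠ 0 := sub_ne_zero.mpr (Ne.symm hNN₁)
  have heq : (ℝ ∙ (N₁ - N)) = (ℝ ∙ (c' - c))ᗮ := by
    apply Submodule.eq_of_le_of_finrank_le hle
    rw [hdim, finrank_span_singleton huN]
  have : a - N ∈ (ℝ ∙ (N₁ - N)) := heq ▸ hamem
  obtain ⟨t, ht⟩ := Submodule.mem_span_singleton.mp this
  exact no_equidistant_collinear haN haN₁ t ht.symm hc1 hc2
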